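/- The infimum of g(A) over all generalized Mahalanobis operators A on H equals the infimum of g_V(B) over all generalized Mahalanobis operators B on V. -/

import Mathlib

open scoped RealInnerProductSpace

/-- A continuous linear operator on a real inner product space is a *generalized Mahalanobis
operator* if it is self-adjoint and positive definite. -/
def IsGenMahalanobis {H : Type*} [NormedAddCommGroup H] [InnerProductSpace ℝ H]
    (A : H →L[ℝ] H) : Prop :=
  (∀ x y : H, ⟪A x, y⟫ = ⟪x, A y⟫) ∧ ∀ x : H, x ≠ 0 → 0 < ⟪A x, x⟫

/-- A linear operator on a (subspace viewed as an) inner product space is a *generalized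
Mahalanobis operator* if it is self-adjoint and positive definite. -/
def IsGenMahalanobisLin {V : Type*} [NormedAddCommGroup V] [InnerProductSpace ℝ V]
    (B : V →ₗ[ℝ] V) : Prop :=
  (∀ x y : V, ⟪B x, y⟫ = ⟪x, B y⟫) ∧ ∀ x : V, x ≠ 0 → 0 < ⟪B x, x⟫

/-- The triplet-comparison empirical objective
`g(A) = Σ_i ℓ (sgn (‖z^i_1 - z^i_2‖_A - ‖z^i_1 - z^i_3‖_A)) (y i)`,
where `‖x‖_A = √⟪A x, x⟫`. -/
noncomputable def tripObj {H : Type*} [NormedAddCommGroup H] [InnerProductSpace ℝ H]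
    {n : ℕ} (ℓ : ℝ → ℝ → ℝ) (z₁ z₂ z₃ : Fin n → H) (y : Fin n → ℝ)
    (A : H → H) : ℝ :=
  ∑ i, ℓ (Real.sign (Real.sqrt ⟪A (z₁ i - z₂ i), z₁ i - z₂ i⟫ -
      Real.sqrt ⟪A (z₁ i - z₃ i), z₁ i - z₃ i⟫)) (y i)

/-- For `v ∈ V`, the inner product of the orthogonal projection of `u` with `v`
agrees with that of `u` with `v`. -/
lemma aux_proj_inner {H : Type*} [NormedAddCommGroup H] [InnerProductSpace ℝ H]
    (V : Submodule ℝ H) [CompleteSpace V] (u : H) (v : V) :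
    ⟪((V.orthogonalProjection u : V) : H), (v : H)⟫ = ⟪u, (v : H)⟫ := by
  have hmem := Submodule.sub_starProjection_mem_orthogonal (K := V) u
  have h : ⟪(v : H), u - ((V.orthogonalProjection u : V) : H)⟫ = 0 :=
    (Submodule.mem_orthogonal _ _).mp hmem (v : H) v.2
  rw [inner_sub_right] at h
  rw [real_inner_comm (v : H) (((V.orthogonalProjection u : V) : H)),
    real_inner_comm (v : H) u]
  linarith

/-- The infimum of the triplet objective `g` over generalized Mahalanobis
operators on `H` equals the infimum of `g_V` over generalized Mahalanobis operators on `V`. -/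
theorem triplet_infimum_eq_subspace_infimum
    {H : Type*} [NormedAddCommGroup H] [InnerProductSpace ℝ H] [CompleteSpace H]
    (V : Submodule ℝ H) [FiniteDimensional ℝ V]
    {n : ℕ} (ℓ : ℝ → ℝ → ℝ) (z₁ z₂ z₃ : Fin n → H) (y : Fin n → ℝ)
    (hz₁ : ∀ i, z₁ i ∈ V) (hz₂ : ∀ i, z₂ i ∈ V) (hz₃ : ∀ i, z₃ i ∈ V)
    (hy : ∀ i, y i = 1 ∨ y i = -1) :
    sInf {r : ℝ | ∃ A : H →L[ℝ] H, IsGenMahalanobis A ∧ r = tripObj ℓ z₁ z₂ z₃ y ⇑A} =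
      sInf {r : ℝ | ∃ B : V →ₗ[ℝ] V, IsGenMahalanobisLin B ∧
        r = tripObj ℓ (fun i => (⟨z₁ i, hz₁ i⟩ : V)) (fun i => (⟨z₂ i, hz₂ i⟩ : V))
          (fun i => (⟨z₃ i, hz₃ i⟩ : V)) y ⇑B} := by
  congr 1
  ext r
  simp only [Set.mem_setOf_eq]
  constructor
  · rintro ⟨A, ⟨hs, hp⟩, rfl⟩
    refine ⟨((V.orthogonalProjection : H →L[ℝ] V) : H →ₗ[ℝ] V).comp
        (A.toLinearMap.comp V.subtype), ⟨?_, ?_⟩, ?_⟩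
    · intro x z
      have k1 : ∀ w v : V,
          ⟪(((V.orthogonalProjection : H →L[ℝ] V) : H →ₗ[ℝ] V).comp
            (A.toLinearMap.comp V.subtype)) w, v⟫ = ⟪A (w : H), (v : H)⟫ := by
        intro w v
        rw [Submodule.coe_inner]
        simpa using aux_proj_inner V (A (w : H)) v
      calc ⟪(((V.orthogonalProjection : H →L[ℝ] V) : H →ₗ[ℝ] V).comp
            (A.toLinearMap.comp V.subtype)) x, z⟫
          = ⟪A (x : H), (z : H)⟫ := k1 x z
        _ = ⟪(x : H), A (z : H)⟫ := hs _ _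
        _ = ⟪A (z : H), (x : H)⟫ := real_inner_comm _ _
        _ = ⟪(((V.orthogonalProjection : H →L[ℝ] V) : H →ₗ[ℝ] V).comp
            (A.toLinearMap.comp V.subtype)) z, x⟫ := (k1 z x).symm
        _ = ⟪x, (((V.orthogonalProjection : H →L[ℝ] V) : H →ₗ[ℝ] V).comp
            (A.toLinearMap.comp V.subtype)) z⟫ := real_inner_comm _ _
    · intro x hx
      have k1 : ⟪(((V.orthogonalProjection : H →L[ℝ] V) : H →ₗ[ℝ] V).comp
            (A.toLinearMap.comp V.subtype)) x, x⟫ = ⟪A (x : H), (x : H)⟫ := by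
        rw [Submodule.coe_inner]
        simpa using aux_proj_inner V (A (x : H)) x
      rw [k1]
      exact hp _ (by simpa using hx)
    · unfold tripObj
      refine Finset.sum_congr rfl fun i _ => ?_
      have k1 : ∀ w : V,
          ⟪(((V.orthogonalProjection : H →L[ℝ] V) : H →ₗ[ℝ] V).comp
            (A.toLinearMap.comp V.subtype)) w, w⟫ = ⟪A (w : H), (w : H)⟫ := by
        intro w
        rw [Submodule.coe_inner]
        simpa using aux_proj_inner V (A (w : H)) w
      have e1 := k1 (⟨z₁ i, hz₁ i⟩ - ⟨z₂ i, hz₂ i⟩)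
      have e2 := k1 (⟨z₁ i, hz₁ i⟩ - ⟨z₃ i, hz₃ i⟩)
      simp only [Submodule.coe_sub] at e1 e2
      rw [e1, e2]
  · rintro ⟨B, ⟨hs, hp⟩, rfl⟩
    set P : H →L[ℝ] V := (V.orthogonalProjection : H →L[ℝ] V) with hPdef
    set Bc : V →L[ℝ] V := LinearMap.toContinuousLinearMap B with hBc
    set A : H →L[ℝ] H := V.subtypeL.comp (Bc.comp P) +
      (ContinuousLinearMap.id ℝ H - V.subtypeL.comp P) with hA
    have hAx : ∀ x : H, A x = ((B (P x) : V) : H) + (x - ((P x : V) : H)) := by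
      intro x
      simp [hA, hBc, ContinuousLinearMap.add_apply, ContinuousLinearMap.sub_apply,
        ContinuousLinearMap.comp_apply]
    have key : ∀ x z : H, ⟪A x, z⟫ =
        ⟪B (P x), P z⟫ + ⟪x - ((P x : V) : H), z - ((P z : V) : H)⟫ := by
      intro x z
      rw [hAx, inner_add_left]
      have h1 : ⟪((B (P x) : V) : H), z⟫ = ⟪B (P x), P z⟫ := by
        have hz : ⟪((B (P x) : V) : H), z - ((P z : V) : H)⟫ = 0 :=
          (Submodule.mem_orthogonal _ _).mp
            (Submodule.sub_starProjection_mem_orthogonal (K := V) z) _ (B (P x)).2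
        rw [inner_sub_right] at hz
        rw [Submodule.coe_inner]
        linarith
      have h2 : ⟪x - ((P x : V) : H), z⟫ =
          ⟪x - ((P x : V) : H), z - ((P z : V) : H)⟫ := by
        have hx : ⟪((P z : V) : H), x - ((P x : V) : H)⟫ = 0 :=
          (Submodule.mem_orthogonal _ _).mp
            (Submodule.sub_starProjection_mem_orthogonal (K := V) x) _ (P z).2
        rw [real_inner_comm] at hx
        rw [inner_sub_right]
        linarith
      rw [h1, h2]
    refine ⟨A, ⟨?_, ?_⟩, ?_⟩
    · intro x z
      have hsymm : ⟪B (P x), P z⟫ = ⟪B (P z), P x⟫ := by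
        rw [hs]; exact real_inner_comm _ _
      calc ⟪A x, z⟫
          = ⟪B (P x), P z⟫ + ⟪x - ((P x : V) : H), z - ((P z : V) : H)⟫ := key x z
        _ = ⟪B (P z), P x⟫ + ⟪z - ((P z : V) : H), x - ((P x : V) : H)⟫ := by
            rw [hsymm, real_inner_comm (z - ((P z : V) : H)) (x - ((P x : V) : H))]
        _ = ⟪A z, x⟫ := (key z x).symm
        _ = ⟪x, A z⟫ := real_inner_comm _ _
    · intro x hx
      rw [key x x]
      rcases eq_or_ne (P x) 0 with h0 | h0
      · rw [h0]
        have hxx : (0 : ℝ) < ⟪x, x⟫ := by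
          rw [real_inner_self_eq_norm_sq]
          exact pow_pos (norm_pos_iff.mpr hx) 2
        simpa using hxx
      · have h1 : 0 < ⟪B (P x), P x⟫ := hp _ h0
        have h2 : (0 : ℝ) ≤ ⟪x - ((P x : V) : H), x - ((P x : V) : H)⟫ :=
          real_inner_self_nonneg
        linarith
    · have keyV : ∀ w : V, ⟪A (w : H), (w : H)⟫ = ⟪B w, w⟫ := by
        intro w
        rw [key]
        simp [hPdef, Submodule.orthogonalProjection_mem_subspace_eq_self]
      unfold tripObj
      refine Finset.sum_congr rfl fun i _ => ?_
      have e1 := keyV (⟨z₁ i, hz₁ i⟩ - ⟨z₂ i, hz₂ i⟩)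
      have e2 := keyV (⟨z₁ i, hz₁ i⟩ - ⟨z₃ i, hz₃ i⟩)
      simp only [Submodule.coe_sub] at e1 e2
      rw [e1, e2]
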